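/- The minors of a generator enriched lattice (L,G) are precisely the generator enriched lattices of the form ⟨ℓ ∨ g₁, …, ℓ ∨ g_k | ℓ⟩ for ℓ ∈ L and g₁, …, g_k ∈ G with g_j ≰ ℓ for all j, where ⟨H|z⟩ denotes the generator enriched lattice with minimal element z, generating set H, and elements all joins of z with subsets of H. -/
import Mathlib


open Finset

/-- A generator-enriched lattice datum inside an ambient lattice `L`:
a minimal element `z` together with a finite generating set of elements
strictly above `z`. The underlying set of elements consists of all joins
of `z` with subsets of the generating set. -/
structure GEL (L : Type*) [Lattice L] [DecidableEq L] where
  z : L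
  gens : Finset L
  lt_gens : ∀ g ∈ gens, z < g

namespace GEL

variable {L K : Type*} [Lattice L] [OrderBot L] [DecidableEq L]

/-- The underlying set of elements of a generator enriched lattice. -/
def carrier (M : GEL L) : Finset L :=
  M.gens.powerset.image fun X => X.sup id ⊔ M.z

/-- Deletion of a set of generators. -/
def delete (M : GEL L) (I : Finset L) : GEL L :=
  ⟨M.z, M.gens \ I, fun g hg => M.lt_gens g (Finset.mem_sdiff.mp hg).1⟩

/-- Restriction to a set of generators. -/
def restrict (M : GEL L) (I : Finset L) : GEL L :=
  M.delete (M.gens \ I)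

/-- Contraction by a set of generators. -/
def contract (M : GEL L) (I : Finset L) : GEL L :=
  ⟨I.sup id ⊔ M.z,
   (M.gens.image fun g => g ⊔ (I.sup id ⊔ M.z)).erase (I.sup id ⊔ M.z),
   fun g hg => by
     obtain ⟨hne, hg'⟩ := Finset.mem_erase.mp hg
     obtain ⟨h, -, rfl⟩ := Finset.mem_image.mp hg'
     exact lt_of_le_of_ne le_sup_right (Ne.symm hne)⟩

open Classical in
/-- Contraction by an element: contract by all generators below it. -/
noncomputable def contractEl (M : GEL L) (ℓ : L) : GEL L :=
  M.contract (M.gens.filter fun g => g ≤ ℓ)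

/-- A single deletion or contraction step. -/
def Step (M N : GEL L) : Prop :=
  ∃ I ⊆ M.gens, N = M.delete I ∨ N = M.contract I

/-- `Minor M N` : `N` is a minor of `M`, i.e. obtained from `M` by a finite
sequence of deletions and contractions. -/
def Minor (M N : GEL L) : Prop :=
  Relation.ReflTransGen Step M N

/-- The generator enriched lattice on a lattice with `⊥`, with the given generating set. -/
def ofGens (G : Finset L) (hG : ∀ g ∈ G, (⊥ : L) < g) : GEL L :=
  ⟨⊥, G, hG⟩

/-- The underlying type of the minor poset of `T`: all minors of `T`
together with an adjoined minimum `none`. -/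
abbrev MP (T : GEL L) := Option {M : GEL L // T.Minor M}

/-- The order relation of the minor poset. -/
def mple (T : GEL L) : MP T → MP T → Prop
  | none, _ => True
  | some _, none => False
  | some A, some B => B.1.Minor A.1

/-- The rank function of the minor poset. -/
def mrank (T : GEL L) : MP T → ℕ
  | none => 0
  | some A => A.1.gens.card + 1

/-- A parallel: an element `ℓ` and distinct generators `g, h` with
`g ⊔ ℓ = h ⊔ ℓ ≠ ℓ`. -/
def HasParallel (M : GEL L) : Prop :=
  ∃ ℓ ∈ M.carrier, ∃ g ∈ M.gens, ∃ h ∈ M.gens,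
    g ≠ h ∧ g ⊔ ℓ = h ⊔ ℓ ∧ g ⊔ ℓ ≠ ℓ

/-- Isomorphism of generator enriched lattices: a join-preserving bijection of the
underlying sets carrying the generating set onto the generating set. -/
def GIso [Lattice K] [OrderBot K] [DecidableEq K] (M : GEL L) (N : GEL K) : Prop :=
  ∃ f : L → K, Set.BijOn f ↑M.carrier ↑N.carrier ∧
    (∀ a ∈ M.carrier, ∀ b ∈ M.carrier, f (a ⊔ b) = f a ⊔ f b) ∧
    f '' ↑M.gens = ↑N.gens

open Classical in
/-- The image generator enriched lattice `⟨f(I) | f(z)⟩` of a strong map. -/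
noncomputable def map [Lattice K] [DecidableEq K] (f : L → K) (M : GEL L) : GEL K :=
  ⟨f M.z, (M.gens.image f).filter fun y => f M.z < y,
   fun g hg => (Finset.mem_filter.mp hg).2⟩

/-- `T` lifts join irreducibles: for every `ℓ` and generator `g` with `g ≰ ℓ`,
the element `g ⊔ ℓ` is join irreducible in the interval `[ℓ, ⊤]`. -/
def LiftsJI (T : GEL L) : Prop :=
  ∀ ℓ : L, ∀ g ∈ T.gens, ¬ g ≤ ℓ →
    ∀ a b : L, ℓ ≤ a → ℓ ≤ b → g ⊔ ℓ = a ⊔ b → g ⊔ ℓ = a ∨ g ⊔ ℓ = b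

end GEL
/-- The minors of `(L,G)` are precisely the generator enriched lattices
`⟨ℓ ∨ g₁, …, ℓ ∨ g_k | ℓ⟩` for `ℓ ∈ L` and `g₁, …, g_k ∈ G` with `g_j ≰ ℓ`. -/
theorem GEL.ext' {L : Type*} [Lattice L] [DecidableEq L] {M N : GEL L}
    (h1 : M.z = N.z) (h2 : M.gens = N.gens) : M = N := by
  cases M; cases N
  simp only at h1 h2
  subst h1; subst h2
  rfl

theorem minor_iff_joins_over_element {L : Type*} [Lattice L] [OrderBot L]
    [DecidableEq L] (T : GEL L) (hcar : ∀ ℓ : L, ℓ ∈ T.carrier) (M : GEL L) :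
    T.Minor M ↔ ∃ (ℓ : L) (S : Finset L), S ⊆ T.gens ∧ (∀ g ∈ S, ¬ g ≤ ℓ) ∧
      M.z = ℓ ∧ M.gens = S.image fun g => g ⊔ ℓ := by
  classical
  constructor
  · intro h
    induction h with
    | refl =>
      refine ⟨T.z, T.gens, le_refl _, fun g hg => (T.lt_gens g hg).not_ge, rfl, ?_⟩
      exact ((Finset.image_id (s := T.gens)).symm.trans
        (Finset.image_congr fun g hg => (sup_eq_left.mpr (T.lt_gens g hg).le).symm)).symm.symm
    | @tail B C hTB step ih =>
      obtain ⟨ℓ, S, hS, hSl, hz, hgens⟩ := ih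
      obtain ⟨I, hI, hC | hC⟩ := step
      · -- delete
        refine ⟨ℓ, S.filter (fun g => ((fun g => g ⊔ ℓ) g) ∉ I),
          fun g hg => hS (Finset.mem_filter.mp hg).1,
          fun g hg => hSl g (Finset.mem_filter.mp hg).1, ?_, ?_⟩
        · rw [hC]; exact hz
        · rw [hC]
          show B.gens \ I = _
          ext y
          simp only [Finset.mem_sdiff, hgens, Finset.mem_image, Finset.mem_filter]
          constructor
          · rintro ⟨⟨g, hg, rfl⟩, hyI⟩
            exact ⟨g, ⟨hg, hyI⟩, rfl⟩
          · rintro ⟨g, ⟨hg, hyI⟩, rfl⟩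
            exact ⟨⟨g, hg, rfl⟩, hyI⟩
      · -- contract
        set ℓ' := I.sup id ⊔ B.z with hℓ'
        have hle : ℓ ≤ ℓ' := hz.ge.trans le_sup_right
        refine ⟨ℓ', S.filter (fun g => ((fun g => g ⊔ ℓ') g) ≠ ℓ'),
          fun g hg => hS (Finset.mem_filter.mp hg).1,
          fun g hg hgle => (Finset.mem_filter.mp hg).2 (sup_eq_right.mpr hgle), ?_, ?_⟩
        · rw [hC]; rfl
        · rw [hC]
          show (B.gens.image fun g => g ⊔ ℓ').erase ℓ' = _
          have hkey : ∀ g : L, g ⊔ ℓ ⊔ ℓ' = g ⊔ ℓ' := fun g => by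
            rw [sup_assoc, sup_eq_right.mpr hle]
          ext y
          simp only [Finset.mem_erase, hgens, Finset.mem_image, Finset.mem_filter]
          constructor
          · rintro ⟨hne, b, ⟨g, hg, rfl⟩, rfl⟩
            rw [hkey] at hne ⊢
            exact ⟨g, ⟨hg, hne⟩, rfl⟩
          · rintro ⟨g, ⟨hg, hne⟩, rfl⟩
            exact ⟨hne, g ⊔ ℓ, ⟨g, hg, rfl⟩, hkey g⟩
  · rintro ⟨ℓ, S, hS, hSl, hz, hgens⟩
    obtain ⟨X, hX, hXl⟩ := Finset.mem_image.mp (hcar ℓ)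
    have hX' : X ⊆ T.gens := Finset.mem_powerset.mp hX
    set B := T.contract X with hB
    have hBz : B.z = ℓ := hXl
    have step1 : GEL.Step T B := ⟨X, hX', Or.inr rfl⟩
    have htarget : S.image (fun g => g ⊔ ℓ) ⊆ B.gens := by
      intro y hy
      obtain ⟨g, hg, rfl⟩ := Finset.mem_image.mp hy
      refine Finset.mem_erase.mpr ⟨?_, ?_⟩
      · rw [hXl]
        intro heq
        exact hSl g hg (sup_eq_right.mp heq)
      · rw [hXl]
        exact Finset.mem_image.mpr ⟨g, hS hg, rfl⟩
    set I := B.gens \ (S.image fun g => g ⊔ ℓ) with hIdef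
    have step2 : GEL.Step B (B.delete I) := ⟨I, Finset.sdiff_subset, Or.inl rfl⟩
    have hdel : B.delete I = M := by
      refine GEL.ext' ?_ ?_
      · show B.z = M.z
        rw [hBz, hz]
      · show B.gens \ I = M.gens
        rw [hIdef, Finset.sdiff_sdiff_self_left, Finset.inter_eq_right.mpr htarget,
          hgens]
    exact Relation.ReflTransGen.tail (Relation.ReflTransGen.single step1) (hdel ▸ step2)
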